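/- Let F be a field of characteristic not 2, and let Z(2,1/2) be the F-vector space with basis {p̂_i : i ∈ ℤ_{>0}} ∪ {â_i : i ∈ ℤ} equipped with the commutative bilinear multiplication: p̂_i p̂_j = (3/4)(p̂_i + p̂_j) − (3/8)(p̂_{i+j} + p̂_{|i−j|}) (with p̂_0 := 0); â_i â_j = p̂_{|i−j|} + (1/2)(â_i + â_j); â_i p̂_j = (3/2)p̂_j − (3/4)â_i + (3/8)(â_{i−j} + â_{i+j}). Then each â_i is an idempotent of Z(2,1/2), and the linear map θ determined by θ(â_i) = â_{1−i} and θ(p̂_j) = p̂_j is an algebra automorphism. -/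

import Mathlib

/-- in the algebra `Z(2,1/2)` (presented by its basis
`p̂_i (i > 0)`, `â_i (i ∈ ℤ)` and structure constants, with `p̂_0 = 0`),
every `â_i` is an idempotent, and the linear map `θ` with `θ(â_i) = â_{1-i}`,
`θ(p̂_j) = p̂_j` is an algebra automorphism. -/
theorem stmt9 {F M : Type*} [Field F] [NonUnitalNonAssocCommRing M]
    [Module F M] [SMulCommClass F M M] [IsScalarTower F M M]
    (hchar : (2 : F) ≠ 0)
    (p : ℕ → M) (b : ℤ → M)
    (hp0 : p 0 = 0)
    (hpp : ∀ i j : ℕ, p i * p j =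
      (3 / 4 : F) • (p i + p j) - (3 / 8 : F) • (p (i + j) + p ((i : ℤ) - (j : ℤ)).natAbs))
    (hbb : ∀ i j : ℤ, b i * b j = p (i - j).natAbs + (1 / 2 : F) • (b i + b j))
    (hbp : ∀ (i : ℤ) (j : ℕ), b i * p j =
      (3 / 2 : F) • p j - (3 / 4 : F) • b i + (3 / 8 : F) • (b (i - j) + b (i + j)))
    (hspan : Submodule.span F (Set.range p ∪ Set.range b) = ⊤)
    (θ : M →ₗ[F] M)
    (hθb : ∀ i : ℤ, θ (b i) = b (1 - i))
    (hθp : ∀ j : ℕ, θ (p j) = p j) :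
    (∀ i : ℤ, b i * b i = b i) ∧ (∀ x y : M, θ (x * y) = θ x * θ y) ∧
      Function.Bijective θ := by
  have hhalf : (1 / 2 : F) + 1 / 2 = 1 := by rw [← add_div, one_add_one_eq_two]; exact div_self hchar
  have hidem : ∀ i : ℤ, b i * b i = b i := by
    intro i
    rw [hbb]
    simp only [sub_self, Int.natAbs_zero, hp0, zero_add, smul_add]
    rw [← add_smul, hhalf, one_smul]
  refine ⟨hidem, ?_, ?_⟩
  · -- multiplicativity
    have key : ∀ x ∈ Set.range p ∪ Set.range b, ∀ y ∈ Set.range p ∪ Set.range b,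
        θ (x * y) = θ x * θ y := by
      rintro x (⟨i, rfl⟩ | ⟨i, rfl⟩) y (⟨j, rfl⟩ | ⟨j, rfl⟩)
      · rw [hpp, hθp, hθp, hpp, map_sub, map_smul, map_smul, map_add, map_add,
          hθp, hθp, hθp, hθp]
      · rw [hθp, hθb, mul_comm (p i), hbp, mul_comm, hbp]
        simp only [map_add, map_sub, map_smul, hθp, hθb]
        rw [show (1 : ℤ) - (j - i) = 1 - j + i by ring,
          show (1 : ℤ) - (j + i) = 1 - j - i by ring, add_comm (b (1 - j + (i:ℤ)))]
      · rw [hbp, hθb, hθp, hbp]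
        simp only [map_add, map_sub, map_smul, hθp, hθb]
        rw [show (1 : ℤ) - (i - j) = 1 - i + j by ring,
          show (1 : ℤ) - (i + j) = 1 - i - j by ring, add_comm (b (1 - i + (j:ℤ)))]
      · rw [hbb, hθb, hθb, hbb, map_add, map_smul, map_add, hθp, hθb, hθb]
        have h : ((1 : ℤ) - i - (1 - j)).natAbs = (i - j).natAbs := by omega
        rw [h]
    intro x y
    have hx : x ∈ Submodule.span F (Set.range p ∪ Set.range b) := hspan ▸ Submodule.mem_top
    have hy : y ∈ Submodule.span F (Set.range p ∪ Set.range b) := hspan ▸ Submodule.mem_top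
    induction hx using Submodule.span_induction with
    | mem x hxm =>
      induction hy using Submodule.span_induction with
      | mem y hym => exact key x hxm y hym
      | zero => simp
      | add u v _ _ hu hv => rw [mul_add, map_add, hu, hv, map_add, mul_add]
      | smul c u _ hu => rw [mul_smul_comm, map_smul, hu, map_smul, mul_smul_comm]
    | zero => simp
    | add u v _ _ hu hv => rw [add_mul, map_add, hu, hv, map_add, add_mul]
    | smul c u _ hu => rw [smul_mul_assoc, map_smul, hu, map_smul, smul_mul_assoc]
  · -- bijectivity : θ ∘ θ = id
    have hinv : θ.comp θ = LinearMap.id := by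
      apply LinearMap.ext_on_range (v := fun x : (Set.range p ∪ Set.range b : Set M) => (x : M))
      · rw [Subtype.range_coe_subtype]
        rw [show {x | x ∈ Set.range p ∪ Set.range b} = Set.range p ∪ Set.range b from rfl, hspan]
      · rintro ⟨x, (⟨i, rfl⟩ | ⟨i, rfl⟩)⟩
        · simp [hθp]
        · simp only [LinearMap.comp_apply, LinearMap.id_apply, hθb]
          rw [show (1 : ℤ) - (1 - i) = i by ring]
    have : ∀ x, θ (θ x) = x := fun x => congrArg (· x) hinv
    exact Function.bijective_iff_has_inverse.2 ⟨θ, this, this⟩
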